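/- arXiv:0708.1343 — 5 statements merged into one kernel-verified Lean document; each statement's English description precedes it below -/
import Mathlib

section
/- Let 1 ≤ k ≤ n−1 and ν_1,…,ν_k ∈ ℕ. Suppose there exist pairwise different indices i_1,…,i_k ∈ {1,…,n−1} and pairwise different indices j_1,…,j_k ∈ {1,…,n} such that j_l − i_l ≡ ν_l (mod n) for all l = 1,…,k. Then there exists a delay-free, semi-reduced matrix M ∈ 𝓜 with Supp(M) = {i_1,…,i_k}, such that the matrix formed by the nonzero rows of M is basic, and such that max_{1≤b≤n} 𝒟(M)_{i_l, b} = ν_l for all l = 1,…,k. -/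
open Polynomial Matrix

/-- Membership in the subring `𝓜` of `F[t]^{n×n}`: every entry strictly below the
diagonal vanishes at `t = 0` (i.e. is a multiple of `t`). -/
def InM {F : Type*} [Field F] {n : ℕ} (M : Matrix (Fin n) (Fin n) (Polynomial F)) : Prop :=
  ∀ a b : Fin n, b < a → (M a b).eval 0 = 0

/-- `M ∈ 𝓜` is delay-free if `m_{aa}(0) ≠ 0` for every index `a` of a nonzero row. -/
def DelayFree {F : Type*} [Field F] {n : ℕ}
    (M : Matrix (Fin n) (Fin n) (Polynomial F)) : Prop :=
  ∀ a : Fin n, M a ≠ 0 → (M a a).eval 0 ≠ 0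

/-- The degree matrix `𝒟(M)`: `𝒟(M)_{ab} = n·deg(m_{ab}) − a + b`, with the zero
polynomial having degree `−∞` (here `⊥` in `WithBot ℤ`). -/
noncomputable def degMat {F : Type*} [Field F] {n : ℕ}
    (M : Matrix (Fin n) (Fin n) (Polynomial F)) : Matrix (Fin n) (Fin n) (WithBot ℤ) :=
  Matrix.of fun a b =>
    WithBot.map (fun d : ℕ => (n : ℤ) * (d : ℤ) - ((a : ℕ) : ℤ) + ((b : ℕ) : ℤ))
      ((M a b).degree)

/-- `M` is semi-reduced if the maxima of the non-trivial rows of `𝒟(M)` occur in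
pairwise different columns. -/
def SemiReduced {F : Type*} [Field F] {n : ℕ}
    (M : Matrix (Fin n) (Fin n) (Polynomial F)) : Prop :=
  ∀ a a' b : Fin n, a ≠ a' → M a ≠ 0 → M a' ≠ 0 →
    degMat M a b = Finset.univ.sup (fun c => degMat M a c) →
    degMat M a' b = Finset.univ.sup (fun c => degMat M a' c) → False

/-- A `k × n` matrix over `F[t]` is basic if it has a right inverse over `F[t]`
(equivalently, its `k × k` minors are coprime). -/
def IsBasic {F : Type*} [Field F] {k n : ℕ}
    (G : Matrix (Fin k) (Fin n) (Polynomial F)) : Prop :=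
  ∃ H : Matrix (Fin n) (Fin k) (Polynomial F), G * H = 1



/-- Explicit Bézout between `f` with `f(0)=1` and `X^N`. -/
lemma bezout_one_sub_X {F : Type*} [Field F] (f : Polynomial F) (hf : f.eval 0 = 1) :
    ∀ N : ℕ, ∃ u v : Polynomial F, f * u + X ^ N * v = 1 := by
  intro N
  induction N with
  | zero => exact ⟨0, 1, by simp⟩
  | succ N ih =>
    obtain ⟨u, v, huv⟩ := ih
    set c : F := v.eval 0 with hc
    have hdvd : X ∣ (v - C c * f) := by
      rw [Polynomial.X_dvd_iff]
      have : (v - C c * f).eval 0 = 0 := by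
        simp [hf, hc]
      simpa [Polynomial.coeff_zero_eq_eval_zero] using this
    obtain ⟨w, hw⟩ := hdvd
    refine ⟨u + C c * X ^ N, w, ?_⟩
    have : f * (u + C c * X ^ N) + X ^ (N + 1) * w
        = f * u + X ^ N * (C c * f + X * w) := by ring
    rw [this, ← hw]
    calc f * u + X ^ N * (C c * f + (v - C c * f)) = f * u + X ^ N * v := by ring_nf
    _ = 1 := huv

/-- Determinant of a matrix triangular with respect to an injective key. -/
lemma det_of_triangular_key {R : Type*} [CommRing R] {k : ℕ}
    (B : Matrix (Fin k) (Fin k) R) (h : Fin k → ℕ) (hinj : Function.Injective h)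
    (htri : ∀ l l' : Fin k, h l' < h l → B l l' = 0) :
    B.det = ∏ l, B l l := by
  have hbt : B.BlockTriangular h := by
    intro l l' hlt
    exact htri l l' hlt
  rw [hbt.det]
  rw [Finset.prod_image (by
    intro x _ y _ hxy
    exact hinj hxy)]
  apply Finset.prod_congr rfl
  intro l _
  haveI : Unique {a : Fin k // h a = h l} :=
    ⟨⟨⟨l, rfl⟩⟩, fun a => Subtype.ext (hinj a.2)⟩
  rw [Matrix.det_unique]
  have hd : ((default : {a : Fin k // h a = h l}) : Fin k) = l :=
    hinj (default : {a : Fin k // h a = h l}).2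
  simp only [Matrix.toSquareBlock_def, Matrix.of_apply, hd]


/-- The window of admissible pivot columns for a row with data `(I, J, D)` over `n` columns. -/
def Wcol (n I J D c : ℕ) : Prop :=
  (c = J ∧ ¬(I = J ∧ D ≠ 0)) ∨ (c = I ∧ I ≠ J) ∨
  (I < c ∧ c ≠ J ∧ c < n ∧ c < n * D + J) ∨ (c < I ∧ c ≠ J ∧ c + n < n * D + J)

/-- Free pivot lemma. -/
lemma free_pivot {k n : ℕ} (I J D : Fin k → ℕ)
    (hIinj : Function.Injective I) (hJinj : Function.Injective J)
    (hDdown : ∀ l, J l < I l → D l ≠ 0)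
    (s : Finset (Fin k)) (hs : s.Nonempty) (C : Finset ℕ)
    (hCn : ∀ c ∈ C, c < n)
    (hIC : ∀ l ∈ s, I l ∈ C) (hJC : ∀ l ∈ s, J l ∈ C)
    (hcard : s.card < C.card) :
    ∃ u ∈ s, ∃ c ∈ C, Wcol n (I u) (J u) (D u) c ∧
      ∀ w ∈ s, w ≠ u → c ≠ I w ∧ c ≠ J w := by
  by_contra hfree
  push_neg at hfree
  have owned : ∀ u ∈ s, ∀ c ∈ C, Wcol n (I u) (J u) (D u) c →
      ∃ w ∈ s, w ≠ u ∧ (c = I w ∨ c = J w) := by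
    intro u hu c hc hw
    obtain ⟨w, hws, hwu, hcw⟩ := hfree u hu c hc hw
    by_cases h : c = I w
    · exact ⟨w, hws, hwu, Or.inl h⟩
    · exact ⟨w, hws, hwu, Or.inr (hcw h)⟩
  -- no ν₀-selfloops
  have hnu0 : ∀ u ∈ s, I u = J u → D u ≠ 0 := by
    intro u hu hIJ hD0
    have hWJ : Wcol n (I u) (J u) (D u) (J u) := Or.inl ⟨rfl, by tauto⟩
    obtain ⟨w, hws, hwu, hc⟩ := owned u hu (J u) (hJC u hu) hWJ
    rcases hc with h | h
    · exact hwu (hIinj (by rw [← h, hIJ]))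
    · exact hwu (hJinj h.symm)
  -- σ : for each non-selfloop u: a row w ≠ u with I w = J u
  have hsigma : ∀ u ∈ s, I u ≠ J u → ∃ w ∈ s, w ≠ u ∧ I w = J u := by
    intro u hu hIJ
    have hWJ : Wcol n (I u) (J u) (D u) (J u) := Or.inl ⟨rfl, fun h => hIJ h.1⟩
    obtain ⟨w, hws, hwu, hc⟩ := owned u hu (J u) (hJC u hu) hWJ
    rcases hc with h | h
    · exact ⟨w, hws, hwu, h.symm⟩
    · exact absurd (hJinj h.symm) hwu
  -- τ : for each non-selfloop u: a row w ≠ u with J w = I u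
  have htau : ∀ u ∈ s, I u ≠ J u → ∃ w ∈ s, w ≠ u ∧ J w = I u := by
    intro u hu hIJ
    have hWI : Wcol n (I u) (J u) (D u) (I u) := Or.inr (Or.inl ⟨rfl, hIJ⟩)
    obtain ⟨w, hws, hwu, hc⟩ := owned u hu (I u) (hIC u hu) hWI
    rcases hc with h | h
    · exact absurd (hIinj h.symm) hwu
    · exact ⟨w, hws, hwu, h.symm⟩
  -- any row w ≠ u with I w = J u (or J w = I u) is itself non-selfloop
  have hsigmaNP : ∀ u ∈ s, ∀ w, w ≠ u → I w = J u → I w ≠ J w := by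
    intro u hu w hwu hIw hIJw
    exact hwu (hJinj (by rw [← hIJw, hIw]))
  -- the owned column set
  classical
  set NP : Finset (Fin k) := s.filter (fun u => I u ≠ J u) with hNP
  set SL : Finset (Fin k) := s.filter (fun u => I u = J u) with hSL
  -- image of I on NP equals image of J on NP
  have hJI : NP.image J = NP.image I := by
    apply Finset.Subset.antisymm
    · intro c hc
      obtain ⟨u, hu, hc⟩ := Finset.mem_image.mp hc
      have hus : u ∈ s := (Finset.mem_filter.mp hu).1
      have huIJ : I u ≠ J u := (Finset.mem_filter.mp hu).2
      obtain ⟨w, hws, hwu, hIw⟩ := hsigma u hus huIJ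
      have : I w ≠ J w := hsigmaNP u hus w hwu hIw
      exact Finset.mem_image.mpr ⟨w, Finset.mem_filter.mpr ⟨hws, this⟩, by rw [hIw, hc]⟩
    · intro c hc
      obtain ⟨u, hu, hc⟩ := Finset.mem_image.mp hc
      have hus : u ∈ s := (Finset.mem_filter.mp hu).1
      have huIJ : I u ≠ J u := (Finset.mem_filter.mp hu).2
      obtain ⟨w, hws, hwu, hJw⟩ := htau u hus huIJ
      have hwNP : I w ≠ J w := by
        intro hIJw
        exact hwu (hIinj (by rw [hIJw, hJw]))
      exact Finset.mem_image.mpr ⟨w, Finset.mem_filter.mpr ⟨hws, hwNP⟩, by rw [hJw, hc]⟩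
  -- owned columns
  set Own : Finset ℕ := s.image I ∪ s.image J with hOwn
  have hOwnsub : Own ⊆ C := by
    intro c hc
    rcases Finset.mem_union.mp hc with h | h
    · obtain ⟨u, hu, rfl⟩ := Finset.mem_image.mp h; exact hIC u hu
    · obtain ⟨u, hu, rfl⟩ := Finset.mem_image.mp h; exact hJC u hu
  have hOwncard : Own.card ≤ s.card := by
    -- s.image J ⊆ s.image I ∪ SL.image J ... we show Own = s.image I ∪ SL-nothing
    -- In fact s.image J ⊆ s.image I : J of NP is I of NP; J of SL = I of SL
    have hsub : s.image J ⊆ s.image I := by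
      intro c hc
      obtain ⟨u, hu, rfl⟩ := Finset.mem_image.mp hc
      by_cases hIJ : I u = J u
      · exact Finset.mem_image.mpr ⟨u, hu, hIJ⟩
      · have : J u ∈ NP.image J :=
          Finset.mem_image.mpr ⟨u, Finset.mem_filter.mpr ⟨hu, hIJ⟩, rfl⟩
        rw [hJI] at this
        obtain ⟨w, hw, hwc⟩ := Finset.mem_image.mp this
        exact Finset.mem_image.mpr ⟨w, (Finset.mem_filter.mp hw).1, hwc⟩
    calc Own.card = (s.image I).card := by
          rw [hOwn, Finset.union_eq_left.mpr hsub]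
    _ ≤ s.card := Finset.card_image_le
  -- an unowned column exists
  have : ∃ cb ∈ C, cb ∉ Own := by
    by_contra hall
    push_neg at hall
    have : C ⊆ Own := hall
    have := Finset.card_le_card this
    omega
  obtain ⟨cb, hcbC, hcbOwn⟩ := this
  have hcbI : ∀ w ∈ s, cb ≠ I w := by
    intro w hw h
    exact hcbOwn (Finset.mem_union_left _ (Finset.mem_image.mpr ⟨w, hw, h.symm⟩))
  have hcbJ : ∀ w ∈ s, cb ≠ J w := by
    intro w hw h
    exact hcbOwn (Finset.mem_union_right _ (Finset.mem_image.mpr ⟨w, hw, h.symm⟩))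
  have hcbn : cb < n := hCn cb hcbC
  -- cb is in nobody's window
  have hcbW : ∀ u ∈ s, ¬ Wcol n (I u) (J u) (D u) cb := by
    intro u hu hW
    obtain ⟨w, hws, hwu, hc⟩ := owned u hu cb hcbC hW
    rcases hc with h | h
    · exact hcbI w hws h
    · exact hcbJ w hws h
  -- no positive selfloops
  have hnoSL : ∀ u ∈ s, I u ≠ J u := by
    intro u hu hIJ
    have hD : D u ≠ 0 := hnu0 u hu hIJ
    apply hcbW u hu
    rcases lt_trichotomy cb (I u) with h | h | h
    · refine Or.inr (Or.inr (Or.inr ⟨h, ?_, ?_⟩))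
      · rw [← hIJ]; exact hcbI u hu
      · have : 1 ≤ D u := Nat.one_le_iff_ne_zero.mpr hD
        have : n ≤ n * D u := Nat.le_mul_of_pos_right n (by omega)
        omega
    · exact absurd h (hcbI u hu)
    · refine Or.inr (Or.inr (Or.inl ⟨h, ?_, hcbn, ?_⟩))
      · rw [← hIJ]; exact hcbI u hu
      · have : 1 ≤ D u := Nat.one_le_iff_ne_zero.mpr hD
        have : n ≤ n * D u := Nat.le_mul_of_pos_right n (by omega)
        omega
  -- downward rows: J u < cb < I u
  have hdown : ∀ u ∈ s, J u < I u → J u < cb ∧ cb < I u := by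
    intro u hu hJI
    have hD : D u ≠ 0 := hDdown u hJI
    have h1 : 1 ≤ D u := Nat.one_le_iff_ne_zero.mpr hD
    have hn : n ≤ n * D u := Nat.le_mul_of_pos_right n (by omega)
    have hW := hcbW u hu
    have hiu : cb < I u := by
      rcases lt_trichotomy cb (I u) with h | h | h
      · exact h
      · exact absurd h (hcbI u hu)
      · exfalso; apply hW
        refine Or.inr (Or.inr (Or.inl ⟨h, ?_, hcbn, by omega⟩))
        intro hcj; exact hcbJ u hu hcj
    refine ⟨?_, hiu⟩
    by_contra hle
    push_neg at hle
    have hne : cb ≠ J u := hcbJ u hu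
    have hlt : cb < J u := lt_of_le_of_ne hle hne
    apply hW
    exact Or.inr (Or.inr (Or.inr ⟨hiu, hne, by omega⟩))
  -- upward rows: I u < cb ↔ J u < cb
  have hup : ∀ u ∈ s, I u < J u → (I u < cb ↔ J u < cb) := by
    intro u hu hIJ
    constructor
    · intro h
      rcases lt_trichotomy cb (J u) with h' | h' | h'
      · exfalso; apply hcbW u hu
        refine Or.inr (Or.inr (Or.inl ⟨h, hcbJ u hu, hcbn, by omega⟩))
      · exact absurd h' (hcbJ u hu)
      · exact h'
    · intro h; omega
  -- choose σ
  have hsigex : ∀ u, ∃ w, u ∈ s → (w ∈ s ∧ w ≠ u ∧ I w = J u) := by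
    intro u
    by_cases hu : u ∈ s
    · obtain ⟨w, hws, hwu, hIw⟩ := hsigma u hu (hnoSL u hu)
      exact ⟨w, fun _ => ⟨hws, hwu, hIw⟩⟩
    · exact ⟨u, fun h => absurd h hu⟩
  choose σf hσ using hsigex
  -- counting: L = rows with J < cb, L' = rows with I < cb
  set L : Finset (Fin k) := s.filter (fun u => J u < cb) with hLdef
  set L' : Finset (Fin k) := s.filter (fun u => I u < cb) with hL'def
  have hL'L : L' ⊆ L := by
    intro w hw
    have hws : w ∈ s := (Finset.mem_filter.mp hw).1
    have hwI : I w < cb := (Finset.mem_filter.mp hw).2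
    rcases lt_trichotomy (I w) (J w) with h | h | h
    · exact Finset.mem_filter.mpr ⟨hws, (hup w hws h).mp hwI⟩
    · exact absurd h (hnoSL w hws)
    · exact absurd hwI (not_lt_of_gt (hdown w hws h).2)
  have hcardle : L.card ≤ L'.card := by
    apply Finset.card_le_card_of_injOn σf
    · intro u hu
      have hus : u ∈ s := (Finset.mem_filter.mp hu).1
      have huJ : J u < cb := (Finset.mem_filter.mp hu).2
      obtain ⟨hws, _, hIw⟩ := hσ u hus
      exact Finset.mem_filter.mpr ⟨hws, by rw [hIw]; exact huJ⟩
    · intro u hu u' hu' heq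
      have hus : u ∈ s := (Finset.mem_filter.mp (Finset.mem_coe.mp hu)).1
      have hus' : u' ∈ s := (Finset.mem_filter.mp (Finset.mem_coe.mp hu')).1
      obtain ⟨_, _, hIw⟩ := hσ u hus
      obtain ⟨_, _, hIw'⟩ := hσ u' hus'
      apply hJinj
      rw [← hIw, ← hIw', heq]
  have hLL' : L = L' :=
    (Finset.eq_of_subset_of_card_le hL'L (le_trans hcardle (le_refl _))).symm ▸
      (Finset.eq_of_subset_of_card_le hL'L hcardle).symm
  -- no downward rows
  have hnodown : ∀ u ∈ s, ¬ J u < I u := by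
    intro u hu h
    obtain ⟨hJcb, hcbI⟩ := hdown u hu h
    have huL : u ∈ L := Finset.mem_filter.mpr ⟨hu, hJcb⟩
    rw [hLL'] at huL
    exact absurd (Finset.mem_filter.mp huL).2 (not_lt_of_gt hcbI)
  -- all rows upward; contradiction with the maximal J
  have hallup : ∀ u ∈ s, I u < J u := by
    intro u hu
    rcases lt_trichotomy (I u) (J u) with h | h | h
    · exact h
    · exact absurd h (hnoSL u hu)
    · exact absurd h (hnodown u hu)
  obtain ⟨u0, hu0, hmax⟩ := Finset.exists_max_image s J hs
  obtain ⟨hws, _, hIw⟩ := hσ u0 hu0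
  have h1 : I (σf u0) < J (σf u0) := hallup _ hws
  have h2 : J (σf u0) ≤ J u0 := hmax _ hws
  omega

/-- Recursive pivot assignment: injective pivots in the windows together with a
triangularity order. -/
lemma assign_pivots {k n : ℕ} (I J D : Fin k → ℕ)
    (hIinj : Function.Injective I) (hJinj : Function.Injective J)
    (hDdown : ∀ l, J l < I l → D l ≠ 0) :
    ∀ (m : ℕ) (s : Finset (Fin k)) (C : Finset ℕ), s.card = m →
    (∀ c ∈ C, c < n) → (∀ l ∈ s, I l ∈ C) → (∀ l ∈ s, J l ∈ C) → s.card < C.card →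
    ∃ (ψ : Fin k → ℕ) (h : Fin k → ℕ),
      (∀ l ∈ s, ψ l ∈ C ∧ Wcol n (I l) (J l) (D l) (ψ l)) ∧
      (Set.InjOn ψ s) ∧ (Set.InjOn h s) ∧
      (∀ l ∈ s, ∀ l' ∈ s, h l' < h l → ψ l' ≠ I l ∧ ψ l' ≠ J l) := by
  intro m
  induction m with
  | zero =>
    intro s C hsc _ _ _ _
    have : s = ∅ := Finset.card_eq_zero.mp hsc
    subst this
    exact ⟨fun _ => 0, fun _ => 0, fun l hl => absurd hl (Finset.notMem_empty l),
      fun l hl => absurd hl (by simp), fun l hl => absurd hl (by simp),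
      fun l hl => absurd hl (by simp)⟩
  | succ m ih =>
    intro s C hsc hCn hIC hJC hcard
    have hs : s.Nonempty := Finset.card_pos.mp (by omega)
    obtain ⟨u, hu, c, hcC, hWc, hfree⟩ :=
      free_pivot I J D hIinj hJinj hDdown s hs C hCn hIC hJC hcard
    set s' := s.erase u with hs'
    set C' := C.erase c with hC'
    have hs'c : s'.card = m := by
      rw [hs', Finset.card_erase_of_mem hu, hsc]
      omega
    have hC'n : ∀ c' ∈ C', c' < n := fun c' hc' => hCn c' (Finset.mem_of_mem_erase hc')
    have hIC' : ∀ l ∈ s', I l ∈ C' := by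
      intro l hl
      have hls : l ∈ s := Finset.mem_of_mem_erase hl
      have hlu : l ≠ u := Finset.ne_of_mem_erase hl
      exact Finset.mem_erase.mpr ⟨Ne.symm (hfree l hls hlu).1, hIC l hls⟩
    have hJC' : ∀ l ∈ s', J l ∈ C' := by
      intro l hl
      have hls : l ∈ s := Finset.mem_of_mem_erase hl
      have hlu : l ≠ u := Finset.ne_of_mem_erase hl
      exact Finset.mem_erase.mpr ⟨Ne.symm (hfree l hls hlu).2, hJC l hls⟩
    have hcard' : s'.card < C'.card := by
      rw [hs'c, hC', Finset.card_erase_of_mem hcC]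
      omega
    obtain ⟨ψ', h', hψ'W, hψ'inj, hh'inj, hψ'ord⟩ := ih s' C' hs'c hC'n hIC' hJC' hcard'
    refine ⟨Function.update ψ' u c, fun l => if l = u then 0 else h' l + 1, ?_, ?_, ?_, ?_⟩
    · intro l hl
      by_cases hlu : l = u
      · subst hlu
        rw [Function.update_self]
        exact ⟨hcC, hWc⟩
      · rw [Function.update_of_ne hlu]
        have hl' : l ∈ s' := Finset.mem_erase.mpr ⟨hlu, hl⟩
        exact ⟨Finset.mem_of_mem_erase (hψ'W l hl').1, (hψ'W l hl').2⟩
    · intro l hl l' hl' heq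
      by_cases hlu : l = u <;> by_cases hl'u : l' = u
      · rw [hlu, hl'u]
      · exfalso
        subst hlu
        rw [Function.update_self, Function.update_of_ne hl'u] at heq
        have : l' ∈ s' := Finset.mem_erase.mpr ⟨hl'u, hl'⟩
        have : ψ' l' ∈ C' := (hψ'W l' this).1
        rw [← heq] at this
        exact (Finset.mem_erase.mp this).1 rfl
      · exfalso
        subst hl'u
        rw [Function.update_self, Function.update_of_ne hlu] at heq
        have : l ∈ s' := Finset.mem_erase.mpr ⟨hlu, hl⟩
        have : ψ' l ∈ C' := (hψ'W l this).1
        rw [heq] at this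
        exact (Finset.mem_erase.mp this).1 rfl
      · rw [Function.update_of_ne hlu, Function.update_of_ne hl'u] at heq
        exact hψ'inj (Finset.mem_coe.mpr (Finset.mem_erase.mpr ⟨hlu, hl⟩))
          (Finset.mem_coe.mpr (Finset.mem_erase.mpr ⟨hl'u, hl'⟩)) heq
    · intro l hl l' hl' heq
      by_cases hlu : l = u <;> by_cases hl'u : l' = u
      · rw [hlu, hl'u]
      · exfalso
        simp only [if_pos hlu, if_neg hl'u] at heq
        omega
      · exfalso
        simp only [if_neg hlu, if_pos hl'u] at heq
        omega
      · simp only [if_neg hlu, if_neg hl'u] at heq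
        exact hh'inj (Finset.mem_coe.mpr (Finset.mem_erase.mpr ⟨hlu, hl⟩))
          (Finset.mem_coe.mpr (Finset.mem_erase.mpr ⟨hl'u, hl'⟩)) (by omega)
    · intro l hl l' hl' hord
      by_cases hlu : l = u
      · subst hlu
        simp only [if_pos rfl] at hord
        exact absurd hord (Nat.not_lt_zero _)
      · simp only [if_neg hlu] at hord
        by_cases hl'u : l' = u
        · subst hl'u
          rw [Function.update_self]
          exact ⟨(hfree l hl hlu).1, (hfree l hl hlu).2⟩
        · simp only [if_neg hl'u] at hord
          rw [Function.update_of_ne hl'u]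
          exact hψ'ord l (Finset.mem_erase.mpr ⟨hlu, hl⟩) l'
            (Finset.mem_erase.mpr ⟨hl'u, hl'⟩) (by omega)

/-- Let `1 ≤ k ≤ n−1` and `ν_1,…,ν_k ∈ ℕ`.  If there are pairwise
different rows `i_1,…,i_k ∈ {1,…,n−1}` and pairwise different columns
`j_1,…,j_k ∈ {1,…,n}` with `j_l − i_l ≡ ν_l (mod n)`, then there is a delay-free
semi-reduced `M ∈ 𝓜` with support `{i_1,…,i_k}`, whose nonzero rows form a basic matrix,
and whose `i_l`-th row maximum of `𝒟(M)` equals `ν_l` for all `l`. -/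
theorem exists_semiReduced_basic_with_rowMax {F : Type*} [Field F] [Fintype F] {n k : ℕ}
    (hn : 2 ≤ n) (hk1 : 1 ≤ k) (hk : k ≤ n - 1) (ν : Fin k → ℕ)
    (i j : Fin k → Fin n) (hi : Function.Injective i) (hj : Function.Injective j)
    (hirange : ∀ l : Fin k, (i l : ℕ) < n - 1)
    (hcong : ∀ l : Fin k, ((j l : ℕ) : ℤ) - ((i l : ℕ) : ℤ) ≡ (ν l : ℤ) [ZMOD n]) :
    ∃ M : Matrix (Fin n) (Fin n) (Polynomial F), InM M ∧ DelayFree M ∧ SemiReduced M ∧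
      (∀ a : Fin n, M a ≠ 0 ↔ ∃ l : Fin k, a = i l) ∧
      IsBasic (Matrix.of fun (l : Fin k) (b : Fin n) => M (i l) b) ∧
      (∀ l : Fin k,
        Finset.univ.sup (fun b => degMat M (i l) b) = ((ν l : ℤ) : WithBot ℤ)) := by
  classical
  -- the exponents D
  have hDex : ∀ l : Fin k, ∃ d : ℕ, n * d + (j l : ℕ) = ν l + (i l : ℕ) := by
    intro l
    have h1 : ((n : ℤ)) ∣ ((ν l : ℤ) - (((j l : ℕ) : ℤ) - ((i l : ℕ) : ℤ))) := (hcong l).dvd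
    obtain ⟨m, hm⟩ := h1
    have hjn : ((j l : ℕ) : ℤ) < n := by exact_mod_cast (j l).2
    have hν : (0 : ℤ) ≤ (ν l : ℤ) := Int.ofNat_nonneg _
    have hii : (0 : ℤ) ≤ ((i l : ℕ) : ℤ) := Int.ofNat_nonneg _
    have hnpos : (0 : ℤ) < n := by exact_mod_cast (by omega : 0 < n)
    have hmpos : 0 ≤ m := by nlinarith
    refine ⟨m.toNat, ?_⟩
    have : (n : ℤ) * m.toNat + (j l : ℕ) = (ν l : ℤ) + (i l : ℕ) := by
      rw [Int.toNat_of_nonneg hmpos]; linarith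
    exact_mod_cast this
  choose D hDeq using hDex
  -- injectivity on values
  have hIinj : Function.Injective (fun l : Fin k => (i l : ℕ)) := by
    intro a b h; exact hi (Fin.val_injective h)
  have hJinj : Function.Injective (fun l : Fin k => (j l : ℕ)) := by
    intro a b h; exact hj (Fin.val_injective h)
  have hDdown : ∀ l, (j l : ℕ) < (i l : ℕ) → D l ≠ 0 := by
    intro l hlt h0
    have := hDeq l
    rw [h0] at this
    omega
  -- positive selfloop fact and ν positivity
  have hnle : ∀ l, D l ≠ 0 → n ≤ n * D l := fun l h =>
    Nat.le_mul_of_pos_right n (Nat.pos_of_ne_zero h)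
  have hνpos : ∀ l, (i l : ℕ) ≠ (j l : ℕ) → 0 < ν l := by
    intro l hne
    have h := hDeq l
    rcases Nat.eq_zero_or_pos (D l) with h0 | h1
    · rw [h0] at h
      have : ¬ (j l : ℕ) < (i l : ℕ) := fun hc => hDdown l hc h0
      omega
    · have := hnle l (by omega)
      have hin : (i l : ℕ) < n := (i l).2
      omega
  -- pivots
  obtain ⟨ψ, hOrd, hW, hψinj, hhinj, hord⟩ :=
    assign_pivots (fun l => (i l : ℕ)) (fun l => (j l : ℕ)) D hIinj hJinj hDdown
      k Finset.univ (Finset.range n) (by simp)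
      (fun c hc => Finset.mem_range.mp hc)
      (fun l _ => Finset.mem_range.mpr (i l).2)
      (fun l _ => Finset.mem_range.mpr (j l).2)
      (by
        simp only [Finset.card_univ, Fintype.card_fin, Finset.card_range]
        omega)
  have hψlt : ∀ l, ψ l < n := fun l => Finset.mem_range.mp (hW l (Finset.mem_univ l)).1
  have hWl : ∀ l, Wcol n (i l : ℕ) (j l : ℕ) (D l) (ψ l) := fun l => (hW l (Finset.mem_univ l)).2
  -- entries
  set E : Fin k → Fin n → Polynomial F := fun l b =>
    if (b : ℕ) = (j l : ℕ) then
      (if (i l : ℕ) = (j l : ℕ) ∧ D l ≠ 0 then X ^ D l + 1 else X ^ D l)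
    else if (b : ℕ) = (i l : ℕ) then 1
    else if (b : ℕ) = ψ l then (if (i l : ℕ) < ψ l then 1 else X)
    else 0 with hE
  set M : Matrix (Fin n) (Fin n) (Polynomial F) :=
    Matrix.of (fun a b => if ha : ∃ l, i l = a then E ha.choose b else 0) with hM
  have hMrow : ∀ l b, M (i l) b = E l b := by
    intro l b
    have ha : ∃ l', i l' = i l := ⟨l, rfl⟩
    have : ha.choose = l := hi ha.choose_spec
    simp only [hM, Matrix.of_apply, dif_pos ha, this]
  have hMoff : ∀ a : Fin n, (¬ ∃ l, i l = a) → M a = 0 := by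
    intro a ha
    funext b
    simp only [hM, Matrix.of_apply, dif_neg ha]
    rfl
  -- nonzero main entry
  have hEj : ∀ l, E l (j l) = (if (i l : ℕ) = (j l : ℕ) ∧ D l ≠ 0 then X ^ D l + 1 else X ^ D l) := by
    intro l
    simp only [hE, if_pos rfl]
  have hEjdeg : ∀ l, (E l (j l)).degree = (D l : WithBot ℕ) := by
    intro l
    rw [hEj l]
    split_ifs with h
    · rw [show (X ^ D l + 1 : Polynomial F) = X ^ D l + C 1 by rw [Polynomial.C_1]]
      exact Polynomial.degree_X_pow_add_C (Nat.pos_of_ne_zero h.2) 1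
    · exact Polynomial.degree_X_pow (D l)
  have hEjne : ∀ l, E l (j l) ≠ 0 := by
    intro l h0
    have := hEjdeg l
    rw [h0, Polynomial.degree_zero] at this
    exact absurd this.symm (WithBot.natCast_ne_bot (D l))
  -- diagonal entry evaluates to 1 at 0
  have hEdiag : ∀ l, (E l (i l)).eval 0 = 1 := by
    intro l
    by_cases hij : (i l : ℕ) = (j l : ℕ)
    · have hbj : ((i l : Fin n) : ℕ) = (j l : ℕ) := hij
      simp only [hE, if_pos hbj]
      split_ifs with h
      · simp [zero_pow h.2]
      · have : D l = 0 := by tauto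
        simp [this]
    · simp only [hE, if_neg hij, if_pos rfl]
      simp
  -- support characterization
  have hsupp : ∀ a : Fin n, M a ≠ 0 ↔ ∃ l : Fin k, a = i l := by
    intro a
    constructor
    · intro hMa
      by_contra hne
      push_neg at hne
      exact hMa (hMoff a (fun ⟨l, hl⟩ => hne l hl.symm))
    · rintro ⟨l, rfl⟩
      intro h0
      have : M (i l) (j l) = 0 := by rw [h0]; rfl
      rw [hMrow] at this
      exact hEjne l this
  -- InM
  have hInM : ∀ a b : Fin n, b < a → ((M a b).eval 0 = 0) := by
    intro a b hba
    by_cases ha : ∃ l, i l = a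
    · obtain ⟨l, rfl⟩ := ha
      rw [hMrow]
      have hvb : (b : ℕ) < (i l : ℕ) := hba
      simp only [hE]
      split_ifs with h1 h2 h3 h4 h5
      · exfalso; omega
      · have hd : D l ≠ 0 := hDdown l (by omega)
        simp [zero_pow hd]
      · exfalso; omega
      · exfalso; omega
      · simp
      · simp
    · rw [hMoff a ha]
      simp
  -- DelayFree
  have hDelay : ∀ a : Fin n, M a ≠ 0 → (M a a).eval 0 ≠ 0 := by
    intro a hMa
    obtain ⟨l, rfl⟩ := (hsupp a).mp hMa
    rw [hMrow, hEdiag]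
    exact one_ne_zero
  -- degree matrix on support rows
  have hdm : ∀ (l : Fin k) (b : Fin n), degMat M (i l) b =
      WithBot.map (fun d : ℕ => (n : ℤ) * (d : ℤ) - ((i l : ℕ) : ℤ) + ((b : ℕ) : ℤ))
        ((E l b).degree) := by
    intro l b
    simp only [degMat, Matrix.of_apply, hMrow]
  -- cast helpers
  have hmaple : ∀ (a b : Fin n) (m wn : ℕ), n * m + (b : ℕ) ≤ wn + (a : ℕ) →
      WithBot.map (fun d : ℕ => (n : ℤ) * (d : ℤ) - ((a : ℕ) : ℤ) + ((b : ℕ) : ℤ))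
        ((m : ℕ) : WithBot ℕ) ≤ ((wn : ℤ) : WithBot ℤ) := by
    intro a b m wn h
    have h1 : WithBot.map (fun d : ℕ => (n : ℤ) * (d : ℤ) - ((a : ℕ) : ℤ) + ((b : ℕ) : ℤ))
        ((m : ℕ) : WithBot ℕ)
        = ((((n : ℤ) * (m : ℤ) - ((a : ℕ) : ℤ) + ((b : ℕ) : ℤ)) : ℤ) : WithBot ℤ) := rfl
    rw [h1]
    have hz : (n : ℤ) * (m : ℤ) + ((b : ℕ) : ℤ) ≤ (wn : ℤ) + ((a : ℕ) : ℤ) := by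
      exact_mod_cast h
    have : (n : ℤ) * (m : ℤ) - ((a : ℕ) : ℤ) + ((b : ℕ) : ℤ) ≤ (wn : ℤ) := by linarith
    exact_mod_cast this
  have hmapeq : ∀ (a b : Fin n) (m wn : ℕ),
      WithBot.map (fun d : ℕ => (n : ℤ) * (d : ℤ) - ((a : ℕ) : ℤ) + ((b : ℕ) : ℤ))
        ((m : ℕ) : WithBot ℕ) = ((wn : ℤ) : WithBot ℤ) → n * m + (b : ℕ) = wn + (a : ℕ) := by
    intro a b m wn h
    have h1 : WithBot.map (fun d : ℕ => (n : ℤ) * (d : ℤ) - ((a : ℕ) : ℤ) + ((b : ℕ) : ℤ))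
        ((m : ℕ) : WithBot ℕ)
        = ((((n : ℤ) * (m : ℤ) - ((a : ℕ) : ℤ) + ((b : ℕ) : ℤ)) : ℤ) : WithBot ℤ) := rfl
    rw [h1] at h
    have hz : (n : ℤ) * (m : ℤ) - ((a : ℕ) : ℤ) + ((b : ℕ) : ℤ) = (wn : ℤ) := by
      exact_mod_cast h
    have : (n : ℤ) * (m : ℤ) + ((b : ℕ) : ℤ) = (wn : ℤ) + ((a : ℕ) : ℤ) := by linarith
    exact_mod_cast this
  have hdmj : ∀ l : Fin k, degMat M (i l) (j l) = ((ν l : ℤ) : WithBot ℤ) := by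
    intro l
    rw [hdm, hEjdeg]
    have h1 : WithBot.map (fun d : ℕ => (n : ℤ) * (d : ℤ) - ((i l : ℕ) : ℤ) + ((j l : ℕ) : ℤ))
        ((D l : ℕ) : WithBot ℕ)
        = ((((n : ℤ) * (D l : ℤ) - ((i l : ℕ) : ℤ) + ((j l : ℕ) : ℤ)) : ℤ) : WithBot ℤ) := rfl
    rw [h1]
    have hz : (n : ℤ) * (D l : ℤ) + ((j l : ℕ) : ℤ) = ((ν l : ℕ) : ℤ) + ((i l : ℕ) : ℤ) := by
      exact_mod_cast congrArg (Nat.cast : ℕ → ℤ) (hDeq l)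
    have : (n : ℤ) * (D l : ℤ) - ((i l : ℕ) : ℤ) + ((j l : ℕ) : ℤ) = ((ν l : ℕ) : ℤ) := by
      linarith
    rw [this]
  have hdmle : ∀ (l : Fin k) (b : Fin n),
      degMat M (i l) b ≤ ((ν l : ℤ) : WithBot ℤ) := by
    intro l b
    by_cases hbj : (b : ℕ) = (j l : ℕ)
    · have : b = j l := Fin.val_injective hbj
      rw [this, hdmj l]
    · rw [hdm]
      simp only [hE, if_neg hbj]
      split_ifs with h2 h3 h4
      · rw [Polynomial.degree_one, ← Nat.cast_zero]
        apply hmaple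
        omega
      · rw [Polynomial.degree_one, ← Nat.cast_zero]
        apply hmaple
        have hwin : ψ l < n * D l + (j l : ℕ) := by
          rcases hWl l with ⟨hc, _⟩ | ⟨hc, _⟩ | ⟨_, _, _, hc⟩ | ⟨hc, _, _⟩
          · exact absurd (h3 ▸ hc : (b : ℕ) = (j l : ℕ)) hbj
          · exact absurd (h3 ▸ hc : (b : ℕ) = (i l : ℕ)) h2
          · exact hc
          · omega
        have := hDeq l
        omega
      · rw [Polynomial.degree_X, ← Nat.cast_one]
        apply hmaple
        have hwin : ψ l + n < n * D l + (j l : ℕ) := by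
          rcases hWl l with ⟨hc, _⟩ | ⟨hc, _⟩ | ⟨hc, _, _, _⟩ | ⟨_, _, hc⟩
          · exact absurd (h3 ▸ hc : (b : ℕ) = (j l : ℕ)) hbj
          · exact absurd (h3 ▸ hc : (b : ℕ) = (i l : ℕ)) h2
          · omega
          · exact hc
        have := hDeq l
        omega
      · rw [Polynomial.degree_zero]
        exact bot_le
  have hdmax : ∀ (l : Fin k) (b : Fin n),
      degMat M (i l) b = ((ν l : ℤ) : WithBot ℤ) → b = j l := by
    intro l b hb
    by_contra hbj'
    have hbj : (b : ℕ) ≠ (j l : ℕ) := fun h => hbj' (Fin.val_injective h)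
    rw [hdm] at hb
    simp only [hE, if_neg hbj] at hb
    revert hb
    split_ifs with h2 h3 h4
    · rw [Polynomial.degree_one, ← Nat.cast_zero]
      intro hb
      have := hmapeq _ _ _ _ hb
      have hνp : 0 < ν l := hνpos l (by omega)
      omega
    · rw [Polynomial.degree_one, ← Nat.cast_zero]
      intro hb
      have heq := hmapeq _ _ _ _ hb
      have hwin : ψ l < n * D l + (j l : ℕ) := by
        rcases hWl l with ⟨hc, _⟩ | ⟨hc, _⟩ | ⟨_, _, _, hc⟩ | ⟨hc, _, _⟩
        · exact absurd (h3 ▸ hc : (b : ℕ) = (j l : ℕ)) hbj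
        · exact absurd (h3 ▸ hc : (b : ℕ) = (i l : ℕ)) h2
        · exact hc
        · omega
      have := hDeq l
      omega
    · rw [Polynomial.degree_X, ← Nat.cast_one]
      intro hb
      have heq := hmapeq _ _ _ _ hb
      have hwin : ψ l + n < n * D l + (j l : ℕ) := by
        rcases hWl l with ⟨hc, _⟩ | ⟨hc, _⟩ | ⟨hc, _, _, _⟩ | ⟨_, _, hc⟩
        · exact absurd (h3 ▸ hc : (b : ℕ) = (j l : ℕ)) hbj
        · exact absurd (h3 ▸ hc : (b : ℕ) = (i l : ℕ)) h2
        · omega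
        · exact hc
      have := hDeq l
      omega
    · rw [Polynomial.degree_zero]
      intro hb
      rw [WithBot.map_bot] at hb
      exact absurd hb.symm (WithBot.coe_ne_bot)
  have hsuprow : ∀ l : Fin k,
      Finset.univ.sup (fun b => degMat M (i l) b) = ((ν l : ℤ) : WithBot ℤ) := by
    intro l
    apply le_antisymm
    · exact Finset.sup_le (fun b _ => hdmle l b)
    · rw [← hdmj l]
      exact Finset.le_sup (Finset.mem_univ (j l))
  -- semi-reduced
  have hsemi : ∀ a a' b : Fin n, a ≠ a' → M a ≠ 0 → M a' ≠ 0 →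
      degMat M a b = Finset.univ.sup (fun c => degMat M a c) →
      degMat M a' b = Finset.univ.sup (fun c => degMat M a' c) → False := by
    intro a a' b hne hMa hMa' h1 h2
    obtain ⟨l, rfl⟩ := (hsupp a).mp hMa
    obtain ⟨l', rfl⟩ := (hsupp a').mp hMa'
    rw [hsuprow l] at h1
    rw [hsuprow l'] at h2
    have e1 := hdmax l b h1
    have e2 := hdmax l' b h2
    exact hne (congrArg i (hj (e1.symm.trans e2)))
  -- first minor: columns i
  set A1 : Matrix (Fin k) (Fin k) (Polynomial F) :=
    Matrix.of (fun l l' => E l (i l')) with hA1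
  have hA1tri : ∀ l l' : Fin k, ((i l' : ℕ) : ℕ) < (i l : ℕ) → (A1 l l').eval 0 = 0 := by
    intro l l' hlt
    simp only [hA1, Matrix.of_apply, hE]
    split_ifs with h1 h2 h3 h4 h5
    · exfalso; omega
    · have hd : D l ≠ 0 := hDdown l (by omega)
      simp [zero_pow hd]
    · exfalso; omega
    · exfalso; omega
    · simp
    · simp
  have hA1diag : ∀ l : Fin k, (A1 l l).eval 0 = 1 := hEdiag
  have hfeval : (A1.det).eval 0 = 1 := by
    have h1 : (Polynomial.evalRingHom (0 : F)) A1.det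
        = ((Polynomial.evalRingHom (0 : F)).mapMatrix A1).det := RingHom.map_det _ _
    have h2 : ((Polynomial.evalRingHom (0 : F)).mapMatrix A1).det
        = ∏ l, ((Polynomial.evalRingHom (0 : F)).mapMatrix A1) l l := by
      apply det_of_triangular_key _ (fun l => (i l : ℕ)) hIinj
      intro l l' hlt
      exact hA1tri l l' hlt
    have h3 : ∀ l : Fin k, ((Polynomial.evalRingHom (0 : F)).mapMatrix A1) l l = 1 := by
      intro l
      exact hA1diag l
    calc (A1.det).eval 0 = (Polynomial.evalRingHom (0 : F)) A1.det := rfl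
    _ = _ := h1
    _ = ∏ l, ((Polynomial.evalRingHom (0 : F)).mapMatrix A1) l l := h2
    _ = 1 := by rw [Finset.prod_congr rfl (fun l _ => h3 l)]; simp
  -- second minor: pivot columns
  set ψF : Fin k → Fin n := fun l => ⟨ψ l, hψlt l⟩ with hψF
  set B : Matrix (Fin k) (Fin k) (Polynomial F) :=
    Matrix.of (fun l l' => E l (ψF l')) with hB
  have hBtri : ∀ l l' : Fin k, hOrd l' < hOrd l → B l l' = 0 := by
    intro l l' hlt
    have hll' : l' ≠ l := by
      intro h; rw [h] at hlt; exact lt_irrefl _ hlt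
    obtain ⟨hne1, hne2⟩ := hord l (Finset.mem_univ l) l' (Finset.mem_univ l') hlt
    have hne3 : ψ l' ≠ ψ l := fun h =>
      hll' (hψinj (Finset.mem_coe.mpr (Finset.mem_univ l'))
        (Finset.mem_coe.mpr (Finset.mem_univ l)) h)
    simp only [hB, Matrix.of_apply, hE, hψF]
    rw [if_neg hne2, if_neg hne1, if_neg hne3]
  have hBdiag : ∀ l : Fin k, ∃ e : ℕ, B l l = X ^ e := by
    intro l
    simp only [hB, Matrix.of_apply, hE, hψF]
    rcases hWl l with ⟨hc, hc2⟩ | ⟨hc, hc2⟩ | ⟨hc1, hc2, _, _⟩ | ⟨hc1, hc2, _⟩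
    · refine ⟨D l, ?_⟩
      rw [if_pos hc, if_neg hc2]
    · refine ⟨0, ?_⟩
      have : ψ l ≠ (j l : ℕ) := by rw [hc]; exact hc2
      rw [if_neg this, if_pos hc, pow_zero]
    · refine ⟨0, ?_⟩
      rw [if_neg hc2, if_neg (by omega : ψ l ≠ (i l : ℕ))]
      simp [hc1]
    · refine ⟨1, ?_⟩
      rw [if_neg hc2, if_neg (by omega : ψ l ≠ (i l : ℕ))]
      simp [show ¬ (i l : ℕ) < ψ l from by omega]
  have hBdet : ∃ N : ℕ, B.det = X ^ N := by
    choose e he using hBdiag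
    refine ⟨∑ l, e l, ?_⟩
    have hOrdInj : Function.Injective hOrd := by
      intro a b h
      exact hhinj (Finset.mem_coe.mpr (Finset.mem_univ a))
        (Finset.mem_coe.mpr (Finset.mem_univ b)) h
    rw [det_of_triangular_key B hOrd hOrdInj hBtri]
    rw [Finset.prod_congr rfl (fun l _ => he l)]
    exact Finset.prod_pow_eq_pow_sum Finset.univ e X
  -- right inverse
  obtain ⟨N, hN⟩ := hBdet
  obtain ⟨u, v, huv⟩ := bezout_one_sub_X A1.det hfeval N
  set G : Matrix (Fin k) (Fin n) (Polynomial F) :=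
    Matrix.of (fun l b => M (i l) b) with hG
  set P1 : Matrix (Fin n) (Fin k) (Polynomial F) :=
    Matrix.of (fun b l' => if b = i l' then 1 else 0) with hP1
  set P2 : Matrix (Fin n) (Fin k) (Polynomial F) :=
    Matrix.of (fun b l' => if b = ψF l' then 1 else 0) with hP2
  have hGP1 : G * P1 = A1 := by
    ext l l'
    simp only [Matrix.mul_apply, hG, hP1, Matrix.of_apply, mul_ite, mul_one, mul_zero]
    rw [Finset.sum_ite_eq' Finset.univ (i l') (fun b => M (i l) b)]
    simp only [Finset.mem_univ, if_pos, hMrow, hA1, Matrix.of_apply]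
  have hGP2 : G * P2 = B := by
    ext l l'
    simp only [Matrix.mul_apply, hG, hP2, Matrix.of_apply, mul_ite, mul_one, mul_zero]
    rw [Finset.sum_ite_eq' Finset.univ (ψF l') (fun b => M (i l) b)]
    simp only [Finset.mem_univ, if_pos, hMrow, hB, Matrix.of_apply]
  have hGH : G * (u • (P1 * A1.adjugate) + v • (P2 * B.adjugate)) = 1 := by
    rw [Matrix.mul_add, Matrix.mul_smul, Matrix.mul_smul, ← Matrix.mul_assoc,
      ← Matrix.mul_assoc, hGP1, hGP2, Matrix.mul_adjugate, Matrix.mul_adjugate, hN]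
    rw [smul_smul, smul_smul, ← add_smul]
    have h1 : u * A1.det + v * X ^ N = 1 := by
      rw [mul_comm u, mul_comm v]; exact huv
    rw [h1, one_smul]
  -- conclusion
  exact ⟨M, hInM, hDelay, hsemi, hsupp,
    ⟨u • (P1 * A1.adjugate) + v • (P2 * B.adjugate), hGH⟩, hsuprow⟩
end

section
/- Let n ≥ 2, let 1 ≤ k ≤ n−1, and let r_1,…,r_k ∈ ℤ/nℤ. Suppose there exist pairwise different i_1,…,i_k ∈ ℤ/nℤ and pairwise different j_1,…,j_k ∈ ℤ/nℤ with j_l − i_l = r_l for all l. Then for any prescribed β ∈ ℤ/nℤ there exist pairwise different i'_1,…,i'_k ∈ ℤ/nℤ with i'_l ≠ β for all l, and pairwise different j'_1,…,j'_k ∈ ℤ/nℤ, such that j'_l − i'_l = r_l for all l. -/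
/-- If the modified rook problem for `r_1,…,r_k ∈ ℤ/nℤ` has a solution
(pairwise different `i_l` and pairwise different `j_l` with `j_l − i_l = r_l`), then for
any prescribed `β ∈ ℤ/nℤ` there is a solution avoiding the row `β`. -/
theorem rook_solution_avoiding_row (n k : ℕ) (hn : 2 ≤ n) (hk1 : 1 ≤ k) (hk : k ≤ n - 1)
    (r : Fin k → ZMod n) (i j : Fin k → ZMod n)
    (hi : Function.Injective i) (hj : Function.Injective j)
    (hsol : ∀ l : Fin k, j l - i l = r l) (β : ZMod n) :
    ∃ i' j' : Fin k → ZMod n,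
      Function.Injective i' ∧ Function.Injective j' ∧
      (∀ l : Fin k, i' l ≠ β) ∧ (∀ l : Fin k, j' l - i' l = r l) := by
  haveI : NeZero n := ⟨by omega⟩
  -- forbidden shifts
  have hcard : (Finset.univ.image (fun l : Fin k => β - i l)).card < Fintype.card (ZMod n) := by
    calc (Finset.univ.image (fun l : Fin k => β - i l)).card
        ≤ (Finset.univ : Finset (Fin k)).card := Finset.card_image_le
      _ = k := by simp
      _ < n := by omega
      _ = Fintype.card (ZMod n) := (ZMod.card n).symm
  have hne : (Finset.univ.image (fun l : Fin k => β - i l))ᶜ.Nonempty := by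
    rw [← Finset.card_pos, Finset.card_compl]
    omega
  obtain ⟨c, hc⟩ := hne
  rw [Finset.mem_compl] at hc
  refine ⟨fun l => i l + c, fun l => j l + c, ?_, ?_, ?_, ?_⟩
  · intro a b h; exact hi (by linear_combination h)
  · intro a b h; exact hj (by linear_combination h)
  · intro l h
    exact hc (Finset.mem_image.mpr ⟨l, Finset.mem_univ l, by linear_combination -h⟩)
  · intro l; linear_combination hsol l
end

section
/- Let n ≥ 2 and let k be an integer with 1 ≤ k ≤ (n+1)/2. Then for any r_1,…,r_k ∈ ℤ/nℤ there exist pairwise different i_1,…,i_k ∈ ℤ/nℤ and pairwise different j_1,…,j_k ∈ ℤ/nℤ such that j_l − i_l = r_l for all l = 1,…,k. -/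
theorem rook_aux (n : ℕ) (hn : 2 ≤ n) :
    ∀ k : ℕ, 2 * k ≤ n + 1 → ∀ r : Fin k → ZMod n,
      ∃ i : Fin k → ZMod n, Function.Injective i ∧
        Function.Injective (fun l => i l + r l) := by
  intro k
  induction k with
  | zero => exact fun _ r => ⟨fun l => 0, fun a => a.elim0, fun a => a.elim0⟩
  | succ k ih =>
    intro hk r
    obtain ⟨i, hi, hj⟩ := ih (by omega) (fun l => r l.castSucc)
    haveI : NeZero n := ⟨by omega⟩
    set S : Finset (ZMod n) :=
      Finset.image i Finset.univ ∪
        Finset.image (fun m => i m + r m.castSucc - r (Fin.last k)) Finset.univ with hS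
    have hcard : S.card < n := by
      have h1 : S.card ≤ k + k := le_trans (Finset.card_union_le _ _)
        (Nat.add_le_add ((Finset.card_image_le).trans (by simp))
          ((Finset.card_image_le).trans (by simp)))
      omega
    obtain ⟨x, hx⟩ : ∃ x : ZMod n, x ∉ S := by
      by_contra h
      push_neg at h
      have hsub : (Finset.univ : Finset (ZMod n)) ⊆ S := fun y _ => h y
      have := Finset.card_le_card hsub
      simp only [Finset.card_univ, ZMod.card] at this
      omega
    have hx1 : ∀ m : Fin k, i m ≠ x := by
      intro m hm
      apply hx
      simp only [hS, Finset.mem_union, Finset.mem_image]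
      exact Or.inl ⟨m, Finset.mem_univ m, hm⟩
    have hx2 : ∀ m : Fin k, i m + r m.castSucc ≠ x + r (Fin.last k) := by
      intro m hm
      apply hx
      simp only [hS, Finset.mem_union, Finset.mem_image]
      refine Or.inr ⟨m, Finset.mem_univ m, ?_⟩
      rw [sub_eq_iff_eq_add]
      exact hm
    refine ⟨Fin.snoc i x, ?_, ?_⟩
    · intro a b hab
      induction a using Fin.lastCases with
      | last =>
        induction b using Fin.lastCases with
        | last => rfl
        | cast b' =>
          simp only [Fin.snoc_last, Fin.snoc_castSucc] at hab
          exact absurd hab.symm (hx1 b')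
      | cast a' =>
        induction b using Fin.lastCases with
        | last =>
          simp only [Fin.snoc_last, Fin.snoc_castSucc] at hab
          exact absurd hab (hx1 a')
        | cast b' =>
          simp only [Fin.snoc_castSucc] at hab
          exact congrArg _ (hi hab)
    · intro a b hab
      simp only at hab
      induction a using Fin.lastCases with
      | last =>
        induction b using Fin.lastCases with
        | last => rfl
        | cast b' =>
          simp only [Fin.snoc_last, Fin.snoc_castSucc] at hab
          exact absurd hab.symm (hx2 b')
      | cast a' =>
        induction b using Fin.lastCases with
        | last =>
          simp only [Fin.snoc_last, Fin.snoc_castSucc] at hab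
          exact absurd hab (hx2 a')
        | cast b' =>
          simp only [Fin.snoc_castSucc] at hab
          exact congrArg _ (hj hab)

/-- For `1 ≤ k ≤ (n+1)/2`, the modified rook problem is solvable for
any `r_1,…,r_k ∈ ℤ/nℤ`: there are pairwise different `i_1,…,i_k` and pairwise different
`j_1,…,j_k` in `ℤ/nℤ` with `j_l − i_l = r_l` for all `l`. -/
theorem rook_solvable_of_small_k (n k : ℕ) (hn : 2 ≤ n) (hk1 : 1 ≤ k)
    (hk : 2 * k ≤ n + 1) (r : Fin k → ZMod n) :
    ∃ i j : Fin k → ZMod n,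
      Function.Injective i ∧ Function.Injective j ∧
      ∀ l : Fin k, j l - i l = r l := by
  obtain ⟨i, hi, hj⟩ := rook_aux n hn k hk r
  exact ⟨i, fun l => i l + r l, hi, hj, fun l => by ring⟩
end

section
/- The set 𝒮 ⊆ (ℤ/nℤ)^{n−1} has the following properties: (i) γ·(1,…,1) ∈ 𝒮 for all γ ∈ ℤ/nℤ; (ii) if r ∈ 𝒮 then τ(r) ∈ 𝒮 for every permutation τ of the n−1 coordinates; (iii) if r ∈ 𝒮 then γ·r ∈ 𝒮 for every unit γ of the ring ℤ/nℤ; (iv) if r ∈ 𝒮 then r + γ·(1,…,1) ∈ 𝒮 for all γ ∈ ℤ/nℤ; (v) 𝒫 ⊆ 𝒮, i.e., every tuple in (ℤ/nℤ)^{n−1} with pairwise different entries is the sum of two tuples each having pairwise different entries. -/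
/-- `𝒫`: the set of `(n−1)`-tuples over `ℤ/nℤ` with pairwise different entries. -/
def PP (n : ℕ) : Set (Fin (n - 1) → ZMod n) :=
  {x | Function.Injective x}

/-- `𝒮`: the set of `(n−1)`-tuples over `ℤ/nℤ` expressible as a sum of two tuples each
having pairwise different entries. -/
def SS (n : ℕ) : Set (Fin (n - 1) → ZMod n) :=
  {r | ∃ x ∈ PP n, ∃ y ∈ PP n, r = x + y}

lemma cast_fin_inj {n : ℕ} (hn : 2 ≤ n) :
    Function.Injective (fun l : Fin (n - 1) => ((l : ℕ) : ZMod n)) := by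
  haveI : NeZero n := ⟨by omega⟩
  intro a b h
  have ha := a.isLt
  have hb := b.isLt
  have := congrArg ZMod.val h
  rw [ZMod.val_cast_of_lt (by omega), ZMod.val_cast_of_lt (by omega)] at this
  exact Fin.ext this

/-- Decomposition of the canonical injective tuple as a sum of two injective tuples. -/
lemma exists_decomp {n : ℕ} (hn : 2 ≤ n) :
    ∃ x y : Fin (n - 1) → ZMod n, Function.Injective x ∧ Function.Injective y ∧
      ∀ l : Fin (n - 1), x l + y l = ((l : ℕ) : ZMod n) := by
  haveI : NeZero n := ⟨by omega⟩
  set m : ℕ := if Even n then n - 1 else n with hm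
  have hmn : m = n - 1 ∨ m = n := by
    by_cases h : Even n
    · left; rw [hm, if_pos h]
    · right; rw [hm, if_neg h]
  have hmodd : m % 2 = 1 := by
    by_cases h : Even n
    · rw [hm, if_pos h]; rw [Nat.even_iff] at h; omega
    · rw [hm, if_neg h]; rw [Nat.even_iff] at h; omega
  have hm1 : n - 1 ≤ m ∧ m ≤ n := by omega
  have hm0 : 0 < m := by omega
  -- branch facts about 2*k % m
  have hbr : ∀ k : ℕ, k < n - 1 →
      (2 * k % m = 2 * k ∧ 2 * k < m) ∨
      (2 * k % m = 2 * k - m ∧ m ≤ 2 * k ∧ 2 * k - m < m) := by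
    intro k hk
    rcases Nat.lt_or_ge (2 * k) m with h | h
    · exact Or.inl ⟨Nat.mod_eq_of_lt h, h⟩
    · right
      have h2 : 2 * k < 2 * m := by omega
      rw [Nat.mod_eq_sub_mod h, Nat.mod_eq_of_lt (by omega)]
      exact ⟨rfl, h, by omega⟩
  refine ⟨fun l => ((2 * (l : ℕ) % m : ℕ) : ZMod n),
          fun l => ((l : ℕ) : ZMod n) - ((2 * (l : ℕ) % m : ℕ) : ZMod n), ?_, ?_, ?_⟩
  · intro a b h
    have ha := a.isLt
    have hb := b.isLt
    have hA := hbr a ha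
    have hB := hbr b hb
    have h' := congrArg ZMod.val h
    rw [ZMod.val_cast_of_lt (by omega : 2 * (a : ℕ) % m < n),
        ZMod.val_cast_of_lt (by omega : 2 * (b : ℕ) % m < n)] at h'
    exact Fin.ext (by omega)
  · intro a b h
    have ha := a.isLt
    have hb := b.isLt
    have hA := hbr a ha
    have hB := hbr b hb
    set A := 2 * (a : ℕ) % m with hAdef
    set B := 2 * (b : ℕ) % m with hBdef
    have h' : ((((a : ℕ) : ℤ) - (A : ℤ) : ℤ) : ZMod n) = ((((b : ℕ) : ℤ) - (B : ℤ) : ℤ) : ZMod n) := by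
      push_cast
      exact_mod_cast h
    rw [ZMod.intCast_eq_intCast_iff] at h'
    obtain ⟨k, hk⟩ := h'.dvd
    -- hk : ((b:ℤ) - B) - ((a:ℤ) - A) = n * k
    have hn0 : (0 : ℤ) < n := by exact_mod_cast (by omega : 0 < n)
    have hd1 : (n : ℤ) * k < (n : ℤ) * 2 := by
      have : (((b : ℕ) : ℤ) - (B : ℤ)) - (((a : ℕ) : ℤ) - (A : ℤ)) < (n : ℤ) * 2 := by
        omega
      omega
    have hd2 : (n : ℤ) * (-2) < (n : ℤ) * k := by
      have : (n : ℤ) * (-2) < (((b : ℕ) : ℤ) - (B : ℤ)) - (((a : ℕ) : ℤ) - (A : ℤ)) := by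
        omega
      omega
    have hk2 : k < 2 := lt_of_mul_lt_mul_left hd1 (le_of_lt hn0)
    have hk3 : -2 < k := lt_of_mul_lt_mul_left hd2 (le_of_lt hn0)
    have : k = -1 ∨ k = 0 ∨ k = 1 := by omega
    apply Fin.ext
    rcases this with rfl | rfl | rfl
    · rw [mul_neg_one] at hk; omega
    · rw [mul_zero] at hk; omega
    · rw [mul_one] at hk; omega
  · intro l; ring

/-- The set `𝒮` satisfies: (i) all constant tuples belong to `𝒮`;
(ii) `𝒮` is stable under permutation of the coordinates; (iii) `𝒮` is stable under
multiplication by units of `ℤ/nℤ`; (iv) `𝒮` is stable under adding constant tuples;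
(v) `𝒫 ⊆ 𝒮`. -/
theorem SS_properties (n : ℕ) (hn : 2 ≤ n) :
    (∀ γ : ZMod n, (fun _ : Fin (n - 1) => γ) ∈ SS n) ∧
    (∀ r ∈ SS n, ∀ τ : Equiv.Perm (Fin (n - 1)), (r ∘ τ) ∈ SS n) ∧
    (∀ r ∈ SS n, ∀ γ : (ZMod n)ˣ, (fun l => (γ : ZMod n) * r l) ∈ SS n) ∧
    (∀ r ∈ SS n, ∀ γ : ZMod n, (r + fun _ => γ) ∈ SS n) ∧
    PP n ⊆ SS n := by
  haveI : NeZero n := ⟨by omega⟩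
  refine ⟨?_, ?_, ?_, ?_, ?_⟩
  · -- (i) constants
    intro γ
    refine ⟨fun l => ((l : ℕ) : ZMod n), cast_fin_inj hn,
            fun l => γ - ((l : ℕ) : ZMod n), ?_, ?_⟩
    · intro a b h
      exact cast_fin_inj hn
        (show (((a : ℕ) : ZMod n)) = ((b : ℕ) : ZMod n) by linear_combination -h)
    · funext l; simp only [Pi.add_apply]; ring
  · -- (ii) permutations
    rintro r ⟨x, hx, y, hy, rfl⟩ τ
    exact ⟨x ∘ τ, hx.comp τ.injective, y ∘ τ, hy.comp τ.injective, rfl⟩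
  · -- (iii) units
    rintro r ⟨x, hx, y, hy, rfl⟩ γ
    refine ⟨fun l => (γ : ZMod n) * x l, ?_, fun l => (γ : ZMod n) * y l, ?_, ?_⟩
    · intro a b h; exact hx ((Units.mul_right_inj γ).mp h)
    · intro a b h; exact hy ((Units.mul_right_inj γ).mp h)
    · funext l; simp only [Pi.add_apply]; ring
  · -- (iv) adding constants
    rintro r ⟨x, hx, y, hy, rfl⟩ γ
    refine ⟨fun l => x l + γ, ?_, y, hy, ?_⟩
    · intro a b h; exact hx (add_right_cancel h)
    · funext l; simp only [Pi.add_apply]; ring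
  · -- (v) PP ⊆ SS
    intro r hr
    have hr : Function.Injective r := hr
    obtain ⟨x₀, y₀, hx₀, hy₀, hxy⟩ := exists_decomp hn
    set e : Fin (n - 1) → ZMod n := fun l => ((l : ℕ) : ZMod n) with he_def
    have he : Function.Injective e := cast_fin_inj hn
    -- missing values
    have hcard : ∀ f : Fin (n - 1) → ZMod n, Function.Injective f →
        ∃ a : ZMod n, (Finset.univ.image f)ᶜ = {a} := by
      intro f hf
      apply Finset.card_eq_one.mp
      rw [Finset.card_compl, Finset.card_image_of_injective _ hf,
          Finset.card_univ, Fintype.card_fin, ZMod.card]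
      omega
    obtain ⟨mr, hmr⟩ := hcard r hr
    obtain ⟨me, hme⟩ := hcard e he
    set c : ZMod n := me - mr with hc
    have hrange : ∀ i, r i + c ∈ Set.range e := by
      intro i
      have h1 : r i ≠ mr := by
        intro h
        have h2 : mr ∈ (Finset.univ.image r)ᶜ := by rw [hmr]; exact Finset.mem_singleton_self _
        rw [Finset.mem_compl] at h2
        exact h2 (h ▸ Finset.mem_image_of_mem r (Finset.mem_univ i))
      have h3 : r i + c ≠ me := by
        intro h
        apply h1
        have : r i + (me - mr) = me := h
        linear_combination this
      have h4 : r i + c ∈ Finset.univ.image e := by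
        by_contra h5
        rw [← Finset.mem_compl, hme, Finset.mem_singleton] at h5
        exact h3 h5
      obtain ⟨j, _, hj⟩ := Finset.mem_image.mp h4
      exact ⟨j, hj⟩
    set τ : Fin (n - 1) → Fin (n - 1) :=
      fun i => (Equiv.ofInjective e he).symm ⟨r i + c, hrange i⟩ with hτ
    have hτe : ∀ i, e (τ i) = r i + c := by
      intro i
      exact Equiv.apply_ofInjective_symm he _
    refine ⟨fun i => x₀ (τ i) - c, ?_, fun i => y₀ (τ i), ?_, ?_⟩
    · intro i j h
      have h1 : τ i = τ j := hx₀ (by simpa using sub_left_injective h)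
      have h2 := congrArg e h1
      rw [hτe, hτe] at h2
      exact hr (add_right_cancel h2)
    · intro i j h
      have h1 : τ i = τ j := hy₀ h
      have h2 := congrArg e h1
      rw [hτe, hτe] at h2
      exact hr (add_right_cancel h2)
    · funext i
      have h2 : x₀ (τ i) + y₀ (τ i) = e (τ i) := hxy (τ i)
      rw [hτe i] at h2
      simp only [Pi.add_apply]
      linear_combination -h2
end

section
/- If r = (r_1,…,r_{n−1}) ∈ (ℤ/nℤ)^{n−1} has at most two different entries, i.e., |{r_1,…,r_{n−1}}| ≤ 2, then r ∈ 𝒮; that is, there exist x, y ∈ (ℤ/nℤ)^{n−1}, each with pairwise different entries, such that r = x + y. -/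
/-- Enumeration of `ZMod n` in "d-chain order": position `p` corresponds to the
element `(p / h) + (p % h) • d` where `h = addOrderOf d`. -/
noncomputable def echain (n : ℕ) (d : ZMod n) (p : ℕ) : ZMod n :=
  ((p / addOrderOf d : ℕ) : ZMod n) + (p % addOrderOf d) • d

lemma div_mod_decomp {h : ℕ} (a b : ℕ) (hb : b < h) :
    (h * a + b) / h = a ∧ (h * a + b) % h = b := by
  have hpos : 0 < h := by omega
  constructor
  · rw [Nat.mul_add_div hpos, Nat.div_eq_of_lt hb, Nat.add_zero]
  · rw [Nat.mul_add_mod, Nat.mod_eq_of_lt hb]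

lemma echain_injOn (n : ℕ) [NeZero n] (d : ZMod n) {p q : ℕ}
    (hp : p < n) (hq : q < n) (hE : echain n d p = echain n d q) : p = q := by
  set h := addOrderOf d with hh
  have hpos : 0 < h := addOrderOf_pos d
  have hdvd : h ∣ n := by have := addOrderOf_dvd_card (x := d); rwa [ZMod.card] at this
  obtain ⟨g, hg⟩ := hdvd
  have hnpos : 0 < n := Nat.pos_of_ne_zero (NeZero.ne n)
  have hgpos : 0 < g := by nlinarith
  obtain ⟨i, s, hs, rfl⟩ : ∃ i s, s < h ∧ p = h * i + s :=
    ⟨p / h, p % h, Nat.mod_lt _ hpos, (Nat.div_add_mod p h).symm⟩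
  obtain ⟨j, t, ht, rfl⟩ : ∃ j t, t < h ∧ q = h * j + t :=
    ⟨q / h, q % h, Nat.mod_lt _ hpos, (Nat.div_add_mod q h).symm⟩
  have hig : i < g := by nlinarith
  have hjg : j < g := by nlinarith
  have hE' : (i : ZMod n) + (s : ZMod n) * d = (j : ZMod n) + (t : ZMod n) * d := by
    unfold echain at hE
    rw [(div_mod_decomp i s hs).1, (div_mod_decomp i s hs).2, (div_mod_decomp j t ht).1,
      (div_mod_decomp j t ht).2, nsmul_eq_mul, nsmul_eq_mul] at hE
    exact hE
  have e1 : ((h : ℕ) : ZMod n) * d = 0 := by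
    rw [← nsmul_eq_mul]; exact addOrderOf_nsmul_eq_zero d
  have e2 : ((((h : ℤ) * i - (h : ℤ) * j) : ℤ) : ZMod n) = 0 := by
    push_cast
    linear_combination ((h : ℕ) : ZMod n) * hE' + (((t : ℕ) : ZMod n) - ((s : ℕ) : ZMod n)) * e1
  have e3 : (n : ℤ) ∣ ((h : ℤ) * i - (h : ℤ) * j) := by
    rwa [ZMod.intCast_zmod_eq_zero_iff_dvd] at e2
  have e4 : (g : ℤ) ∣ ((i : ℤ) - (j : ℤ)) := by
    have : ((h : ℤ) * g) ∣ ((h : ℤ) * ((i : ℤ) - (j : ℤ))) := by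
      rw [mul_sub]
      convert e3 using 2
      exact_mod_cast congrArg (fun x : ℕ => (x : ℤ)) hg.symm
    exact (mul_dvd_mul_iff_left (show (h : ℤ) ≠ 0 by positivity)).1 this
  have hij : i = j := by
    have := Int.eq_zero_of_abs_lt_dvd e4 (by rw [abs_sub_lt_iff]; omega)
    omega
  subst hij
  have e5 : ((s : ℤ) - (t : ℤ)) • d = 0 := by
    rw [zsmul_eq_mul]
    push_cast
    linear_combination hE'
  have e6 : ((h : ℤ)) ∣ ((s : ℤ) - (t : ℤ)) := by
    rw [hh]
    exact_mod_cast (addOrderOf_dvd_iff_zsmul_eq_zero).2 e5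
  have : s = t := by
    have := Int.eq_zero_of_abs_lt_dvd e6 (by rw [abs_sub_lt_iff]; omega)
    omega
  omega

lemma echain_succ (n : ℕ) [NeZero n] (d : ZMod n) (p : ℕ)
    (hmod : p % addOrderOf d + 1 ≠ addOrderOf d) :
    echain n d p + d = echain n d (p + 1) := by
  have hpos : 0 < addOrderOf d := addOrderOf_pos d
  obtain ⟨q, s, hs, rfl⟩ : ∃ q s, s < addOrderOf d ∧ p = addOrderOf d * q + s :=
    ⟨p / addOrderOf d, p % addOrderOf d, Nat.mod_lt _ hpos, (Nat.div_add_mod p _).symm⟩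
  rw [(div_mod_decomp q s hs).2] at hmod
  have hs1 : s + 1 < addOrderOf d := by omega
  unfold echain
  rw [(div_mod_decomp q s hs).1, (div_mod_decomp q s hs).2,
    show addOrderOf d * q + s + 1 = addOrderOf d * q + (s + 1) by omega,
    (div_mod_decomp q (s + 1) hs1).1, (div_mod_decomp q (s + 1) hs1).2,
    succ_nsmul, add_assoc]

lemma echain_wrap (n : ℕ) [NeZero n] (d : ZMod n) (p : ℕ)
    (hmod : p % addOrderOf d + 1 = addOrderOf d) :
    echain n d p + d = echain n d (p / addOrderOf d * addOrderOf d) := by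
  have hpos : 0 < addOrderOf d := addOrderOf_pos d
  obtain ⟨q, s, hs, rfl⟩ : ∃ q s, s < addOrderOf d ∧ p = addOrderOf d * q + s :=
    ⟨p / addOrderOf d, p % addOrderOf d, Nat.mod_lt _ hpos, (Nat.div_add_mod p _).symm⟩
  rw [(div_mod_decomp q s hs).2] at hmod
  have h0 : (0 : ℕ) < addOrderOf d := hpos
  unfold echain
  rw [(div_mod_decomp q s hs).1, (div_mod_decomp q s hs).2,
    show q * addOrderOf d = addOrderOf d * q + 0 by ring,
    (div_mod_decomp q 0 h0).1, (div_mod_decomp q 0 h0).2,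
    zero_nsmul, add_zero, add_assoc,
    show (s • d + d) = (s + 1) • d by rw [succ_nsmul], hmod,
    addOrderOf_nsmul_eq_zero d, add_zero]

/-- If a tuple `r ∈ (ℤ/nℤ)^{n−1}` has at most two different entries,
then `r ∈ 𝒮`, i.e. `r` is the sum of two tuples each having pairwise different
entries. -/
theorem mem_SS_of_at_most_two_values (n : ℕ) (hn : 2 ≤ n) (r : Fin (n - 1) → ZMod n)
    (h2 : (Set.range r).ncard ≤ 2) : r ∈ SS n := by
  haveI : NeZero n := ⟨by omega⟩
  have hm1 : 0 < n - 1 := by omega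
  set a := r ⟨0, hm1⟩ with ha
  clear_value a
  obtain ⟨b, hb⟩ : ∃ b, ∀ i, r i ≠ a → r i = b := by
    by_cases hex : ∃ j, r j ≠ a
    · obtain ⟨j0, hj0⟩ := hex
      refine ⟨r j0, fun i hi => ?_⟩
      by_contra hne
      have hsub : ({a, r j0, r i} : Set (ZMod n)) ⊆ Set.range r := by
        intro z hz
        rcases hz with rfl | rfl | rfl
        · exact ⟨_, ha.symm⟩
        · exact ⟨_, rfl⟩
        · exact ⟨_, rfl⟩
      have h3 : ({a, r j0, r i} : Set (ZMod n)).ncard = 3 := by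
        rw [Set.ncard_insert_of_notMem (by
          simp only [Set.mem_insert_iff, Set.mem_singleton_iff]
          push_neg
          exact ⟨fun hh => hj0 hh.symm, fun hh => hi hh.symm⟩),
          Set.ncard_pair (fun hh => hne hh.symm)]
      have := Set.ncard_le_ncard hsub (Set.finite_range r)
      omega
    · push_neg at hex
      exact ⟨a, fun i hi => absurd (hex i) hi⟩
  set d := a - b with hd
  clear_value d
  set A : Finset (Fin (n - 1)) := Finset.univ.filter (fun i => r i = a) with hA
  set B : Finset (Fin (n - 1)) := Finset.univ.filter (fun i => ¬(r i = a)) with hB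
  set k := A.card with hk
  clear_value A B k
  have hkm : k ≤ n - 1 := by
    rw [hk]
    simpa using Finset.card_le_card (Finset.subset_univ A)
  have hcards : k + B.card = n - 1 := by
    rw [hk, hA, hB, Finset.card_filter_add_card_filter_not]; simp
  have hhpos : 0 < addOrderOf d := addOrderOf_pos d
  have hdvd : addOrderOf d ∣ n := by
    have := addOrderOf_dvd_card (x := d); rwa [ZMod.card] at this
  set h := addOrderOf d with hh
  clear_value h
  set pe : ℕ := if k % h = 0 then n - 1 else k / h * h + (h - 1) with hpe
  set pos : Fin (n - 1) → ℕ := fun i =>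
    if hi : r i = a then
      ((A.orderIsoOfFin rfl).symm ⟨i, by simp [hA, hi]⟩ : Fin A.card).val
    else
      (if k + ((B.orderIsoOfFin rfl).symm ⟨i, by simp [hB, hi]⟩ : Fin B.card).val < pe
        then k + ((B.orderIsoOfFin rfl).symm ⟨i, by simp [hB, hi]⟩ : Fin B.card).val
        else k + ((B.orderIsoOfFin rfl).symm ⟨i, by simp [hB, hi]⟩ : Fin B.card).val + 1)
    with hposdef
  clear_value pe pos
  have posA_lt : ∀ i, r i = a → pos i < k := by
    intro i hi
    rw [hposdef]
    simp only [dif_pos hi]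
    rw [hk]
    exact ((A.orderIsoOfFin rfl).symm ⟨i, by simp [hA, hi]⟩).isLt
  have posB_ge : ∀ i, ¬(r i = a) → k ≤ pos i := by
    intro i hi
    rw [hposdef]
    simp only [dif_neg hi]
    split <;> omega
  have posB_le : ∀ i, ¬(r i = a) → pos i ≤ n - 1 := by
    intro i hi
    rw [hposdef]
    simp only [dif_neg hi]
    have ht : (((B.orderIsoOfFin rfl).symm ⟨i, by simp [hB, hi]⟩ : Fin B.card)).val < B.card :=
      Fin.isLt _
    split <;> omega
  have posB_ne : ∀ i, ¬(r i = a) → pos i ≠ pe := by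
    intro i hi
    rw [hposdef]
    simp only [dif_neg hi]
    split <;> omega
  have pos_lt_n : ∀ i, pos i < n := by
    intro i
    by_cases hi : r i = a
    · have := posA_lt i hi; omega
    · have := posB_le i hi; omega
  have pos_inj : Function.Injective pos := by
    intro i j hij
    by_cases hi : r i = a <;> by_cases hj : r j = a
    · rw [hposdef] at hij
      simp only [dif_pos hi, dif_pos hj] at hij
      have := (A.orderIsoOfFin rfl).symm.injective (Fin.val_injective hij)
      exact Subtype.ext_iff.1 this
    · have h1 := posA_lt i hi; have h2 := posB_ge j hj; omega
    · have h1 := posA_lt j hj; have h2 := posB_ge i hi; omega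
    · rw [hposdef] at hij
      simp only [dif_neg hi, dif_neg hj] at hij
      have : ((B.orderIsoOfFin rfl).symm ⟨i, by simp [hB, hi]⟩ : Fin B.card).val
           = ((B.orderIsoOfFin rfl).symm ⟨j, by simp [hB, hj]⟩ : Fin B.card).val := by
        split at hij <;> split at hij <;> omega
      have := (B.orderIsoOfFin rfl).symm.injective (Fin.val_injective this)
      exact Subtype.ext_iff.1 this
  -- the first summand
  set x : Fin (n - 1) → ZMod n := fun i => echain n d (pos i) with hx
  clear_value x
  have hxinj : Function.Injective x := by
    intro i j hij
    rw [hx] at hij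
    simp only at hij
    exact pos_inj (echain_injOn n d (pos_lt_n i) (pos_lt_n j) hij)
  -- the key cross condition
  have key : ∀ i j, r i = a → ¬(r j = a) → x i ≠ x j + d := by
    intro i j hi hj heq
    have hBk : k ≤ pos j := posB_ge j hj
    have hBle : pos j ≤ n - 1 := posB_le j hj
    have hBne : pos j ≠ pe := posB_ne j hj
    have hiA : pos i < k := posA_lt i hi
    by_cases hm : pos j % h + 1 = h
    · rw [hx] at heq
      simp only at heq
      rw [echain_wrap n d (pos j) (by rw [← hh]; exact hm), ← hh] at heq
      have hlt : pos j / h * h < n := by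
        calc pos j / h * h ≤ pos j := Nat.div_mul_le_self _ _
        _ < n := pos_lt_n j
      have hpi : pos i = pos j / h * h := echain_injOn n d (pos_lt_n i) hlt heq
      have e1 : h * (k / h) + k % h = k := Nat.div_add_mod k h
      have e2 : h * (pos j / h) + pos j % h = pos j := Nat.div_add_mod (pos j) h
      have hle : k / h ≤ pos j / h := Nat.div_le_div_right hBk
      have mc1 : k / h * h = h * (k / h) := Nat.mul_comm _ _
      have mc2 : pos j / h * h = h * (pos j / h) := Nat.mul_comm _ _
      have hmlt : k % h < h := Nat.mod_lt k hhpos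
      by_cases hkh : k % h = 0
      · have : h * (k / h) ≤ h * (pos j / h) := Nat.mul_le_mul_left _ hle
        omega
      · have hne' : k / h ≠ pos j / h := by
          intro hq
          apply hBne
          have := congrArg (h * ·) hq
          rw [hpe, if_neg hkh]
          omega
        have hlt2 : k / h < pos j / h := lt_of_le_of_ne hle hne'
        have : h * (k / h + 1) ≤ h * (pos j / h) := Nat.mul_le_mul_left _ hlt2
        have hmul : h * (k / h + 1) = h * (k / h) + h := by ring
        omega
    · rw [hx] at heq
      simp only at heq
      rw [echain_succ n d (pos j) (by rw [← hh]; exact hm)] at heq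
      -- pos j + 1 < n
      obtain ⟨g, hg⟩ := hdvd
      have hgpos : 0 < g := by nlinarith
      have hmul2 : h * (g - 1) + h = h * g := by
        rw [← Nat.mul_succ]
        congr 1
        omega
      have hn1 : n - 1 = h * (g - 1) + (h - 1) := by omega
      have hn1mod : (n - 1) % h = h - 1 := by
        rw [hn1, (div_mod_decomp (g - 1) (h - 1) (by omega)).2]
      have hjn : pos j ≠ n - 1 := by
        intro hq
        rw [hq, hn1mod] at hm
        omega
      have hjlt : pos j + 1 < n := by omega
      have hpi : pos i = pos j + 1 := echain_injOn n d (pos_lt_n i) hjlt heq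
      omega
  -- the second summand
  set y : Fin (n - 1) → ZMod n := fun i => r i - x i with hy
  clear_value y
  have hyinj : Function.Injective y := by
    intro i j hij
    rw [hy] at hij
    simp only at hij
    clear hposdef
    by_cases hi : r i = a <;> by_cases hj : r j = a
    · apply hxinj
      rw [hi, hj] at hij
      have : x i = x j := by linear_combination -hij
      exact this
    · exfalso
      apply key i j hi hj
      rw [hi, hb j hj] at hij
      rw [hd]
      linear_combination -hij
    · exfalso
      apply key j i hj hi
      rw [hj, hb i hi] at hij
      rw [hd]
      linear_combination hij
    · apply hxinj
      rw [hb i hi, hb j hj] at hij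
      have : x i = x j := by linear_combination -hij
      exact this
  refine ⟨x, hxinj, y, hyinj, ?_⟩
  funext i
  simp only [Pi.add_apply, hy]
  ring
end
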